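/- arXiv:2511.07184 — 2 statements merged into one kernel-verified Lean document; each statement's English description precedes it below -/
import Mathlib

section
/- (Compactness from matrix decay) Let M : ℝ^{2d} → (0,∞) be a tempered weight with M(u) → 0 as ‖u‖ → ∞, and let (K_{\tilde α, \tilde β})_{\tilde α, \tilde β ∈ ℤ^{2d}} satisfy, for every n ∈ ℕ, |K_{\tilde α, \tilde β}| ≤ C_n ⟨\tilde α − \tilde β⟩^{−n} M(\tilde α) for all \tilde α, \tilde β and some C_n > 0. Then the induced operator on ℓ²(ℤ^{2d}), (c_{\tilde β}) ↦ (Σ_{\tilde β} K_{\tilde α, \tilde β} c_{\tilde β})_{\tilde α}, is compact. -/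
open Real

/-- Embedding of the lattice `ℤ^{2d}` into `ℝ^{2d}`. -/
noncomputable def latt2 {d : ℕ} (α : Fin (2 * d) → ℤ) : EuclideanSpace ℝ (Fin (2 * d)) :=
  WithLp.toLp 2 (fun i => (α i : ℝ))

/-- Japanese bracket `⟨v⟩ = √(1 + ‖v‖²)` on `ℝ^{2d}`. -/
noncomputable def jb {d : ℕ} (v : EuclideanSpace ℝ (Fin (2 * d))) : ℝ :=
  Real.sqrt (1 + ‖v‖ ^ 2)

open scoped ENNReal NNReal

section Aux
variable {ι : Type*}

/-- Weighted Cauchy–Schwarz for `tsum` in `ℝ≥0∞`. -/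
lemma ennreal_cs (w f : ι → ℝ≥0∞) :
    (∑' i, w i * f i) ^ 2 ≤ (∑' i, w i) * (∑' i, w i * f i ^ 2) := by
  have key : ∀ s : Finset ι, ∑ i ∈ s, w i * f i ≤
      (∑' i, w i) ^ ((2:ℝ)⁻¹) * (∑' i, w i * f i ^ 2) ^ ((2:ℝ)⁻¹) := by
    intro s
    have h := ENNReal.inner_le_weight_mul_Lp_of_nonneg s (by norm_num : (1:ℝ) ≤ 2) w f
    have h2 : ∀ i, w i * f i ^ (2:ℝ) = w i * f i ^ 2 := by
      intro i; rw [← ENNReal.rpow_natCast (f i) 2]; norm_num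
    rw [show (1 - (2:ℝ)⁻¹) = (2:ℝ)⁻¹ by norm_num] at h
    simp_rw [h2] at h
    refine h.trans (mul_le_mul' ?_ ?_)
    · exact ENNReal.rpow_le_rpow (ENNReal.sum_le_tsum s) (by norm_num)
    · exact ENNReal.rpow_le_rpow (ENNReal.sum_le_tsum s) (by norm_num)
  have h1 : ∑' i, w i * f i ≤
      (∑' i, w i) ^ ((2:ℝ)⁻¹) * (∑' i, w i * f i ^ 2) ^ ((2:ℝ)⁻¹) := by
    rw [ENNReal.tsum_eq_iSup_sum]; exact iSup_le key
  calc (∑' i, w i * f i) ^ 2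
      ≤ ((∑' i, w i) ^ ((2:ℝ)⁻¹) * (∑' i, w i * f i ^ 2) ^ ((2:ℝ)⁻¹)) ^ 2 :=
        pow_le_pow_left' h1 2
    _ = (∑' i, w i) * (∑' i, w i * f i ^ 2) := by
        rw [mul_pow, ← ENNReal.rpow_natCast ((∑' i, w i) ^ ((2:ℝ)⁻¹)) 2,
          ← ENNReal.rpow_natCast ((∑' i, w i * f i ^ 2) ^ ((2:ℝ)⁻¹)) 2,
          ← ENNReal.rpow_mul, ← ENNReal.rpow_mul]
        norm_num

/-- Schur test on `ℓ²`. -/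
lemma schur_exists (A : ι → ι → ℂ) (S : ℝ≥0)
    (hrow : ∀ α, ∑' β, (‖A α β‖₊ : ℝ≥0∞) ≤ S)
    (hcol : ∀ β, ∑' α, (‖A α β‖₊ : ℝ≥0∞) ≤ S) :
    ∃ T : lp (fun _ : ι => ℂ) 2 →L[ℂ] lp (fun _ : ι => ℂ) 2,
      (∀ c α, (T c : ∀ _ : ι, ℂ) α = ∑' β, A α β * (c : ∀ _ : ι, ℂ) β) ∧ ‖T‖ ≤ S := by
  have hrowNN : ∀ α, Summable fun β => ‖A α β‖₊ := fun α =>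
    ENNReal.tsum_coe_ne_top_iff_summable.mp ((hrow α).trans_lt ENNReal.coe_lt_top).ne
  have hrowS : ∀ α, Summable fun β => ‖A α β‖ := fun α =>
    NNReal.summable_coe.mpr (hrowNN α)
  have hsumnorm : ∀ (c : lp (fun _ : ι => ℂ) 2) α,
      Summable fun β => ‖A α β * (c : ∀ _ : ι, ℂ) β‖ := by
    intro c α
    refine Summable.of_nonneg_of_le (fun _ => norm_nonneg _) (fun β => ?_)
      ((hrowS α).mul_right ‖c‖)
    rw [norm_mul]
    exact mul_le_mul_of_nonneg_left (lp.norm_apply_le_norm two_ne_zero c β) (norm_nonneg _)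
  have hsum : ∀ (c : lp (fun _ : ι => ℂ) 2) α,
      Summable fun β => A α β * (c : ∀ _ : ι, ℂ) β := fun c α => (hsumnorm c α).of_norm
  have keyest : ∀ c : lp (fun _ : ι => ℂ) 2,
      ∑' α, ((‖∑' β, A α β * (c : ∀ _ : ι, ℂ) β‖₊ : ℝ≥0∞)) ^ 2 ≤
        (S : ℝ≥0∞) ^ 2 * ∑' β, ((‖(c : ∀ _ : ι, ℂ) β‖₊ : ℝ≥0∞)) ^ 2 := by
    intro c
    set a : ι → ι → ℝ≥0∞ := fun α β => (‖A α β‖₊ : ℝ≥0∞) with ha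
    set e : ι → ℝ≥0∞ := fun β => (‖(c : ∀ _ : ι, ℂ) β‖₊ : ℝ≥0∞) with he
    have h1 : ∀ α, (‖∑' β, A α β * (c : ∀ _ : ι, ℂ) β‖₊ : ℝ≥0∞) ≤ ∑' β, a α β * e β := by
      intro α
      have hs : Summable fun β => ‖A α β * (c : ∀ _ : ι, ℂ) β‖₊ := by
        rw [← NNReal.summable_coe]
        simpa [coe_nnnorm] using hsumnorm c α
      calc (‖∑' β, A α β * (c : ∀ _ : ι, ℂ) β‖₊ : ℝ≥0∞)
          ≤ ∑' β, (‖A α β * (c : ∀ _ : ι, ℂ) β‖₊ : ℝ≥0∞) := by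
            rw [← ENNReal.coe_tsum hs]
            exact_mod_cast nnnorm_tsum_le hs
        _ = ∑' β, a α β * e β := by
            apply tsum_congr; intro β; rw [nnnorm_mul, ENNReal.coe_mul]
    have h2 : ∀ α, ((‖∑' β, A α β * (c : ∀ _ : ι, ℂ) β‖₊ : ℝ≥0∞)) ^ 2 ≤
        (S : ℝ≥0∞) * ∑' β, a α β * e β ^ 2 := by
      intro α
      calc ((‖∑' β, A α β * (c : ∀ _ : ι, ℂ) β‖₊ : ℝ≥0∞)) ^ 2
          ≤ (∑' β, a α β * e β) ^ 2 := pow_le_pow_left' (h1 α) 2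
        _ ≤ (∑' β, a α β) * ∑' β, a α β * e β ^ 2 := ennreal_cs _ _
        _ ≤ (S : ℝ≥0∞) * ∑' β, a α β * e β ^ 2 := mul_le_mul' (hrow α) le_rfl
    calc ∑' α, ((‖∑' β, A α β * (c : ∀ _ : ι, ℂ) β‖₊ : ℝ≥0∞)) ^ 2
        ≤ ∑' α, (S : ℝ≥0∞) * ∑' β, a α β * e β ^ 2 := ENNReal.tsum_le_tsum h2
      _ = (S : ℝ≥0∞) * ∑' β, (∑' α, a α β) * e β ^ 2 := by
          rw [ENNReal.tsum_mul_left]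
          congr 1
          rw [ENNReal.tsum_comm]
          exact tsum_congr fun β => ENNReal.tsum_mul_right
      _ ≤ (S : ℝ≥0∞) * ∑' β, (S : ℝ≥0∞) * e β ^ 2 :=
          mul_le_mul' le_rfl (ENNReal.tsum_le_tsum fun β => mul_le_mul' (hcol β) le_rfl)
      _ = (S : ℝ≥0∞) ^ 2 * ∑' β, e β ^ 2 := by
          rw [ENNReal.tsum_mul_left, ← mul_assoc, sq]
  have hpt : (2:ℝ≥0∞).toReal = 2 := by norm_num
  have hrpow : ∀ x : ℝ, 0 ≤ x → x ^ (2:ℝ≥0∞).toReal = x ^ (2:ℕ) := by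
    intro x hx
    rw [hpt, show (2:ℝ) = ((2:ℕ):ℝ) by norm_num, Real.rpow_natCast]
  have hc2 : ∀ c : lp (fun _ : ι => ℂ) 2,
      Summable fun β => ‖(c : ∀ _ : ι, ℂ) β‖₊ ^ 2 := by
    intro c
    have h := (lp.memℓp c).summable (by norm_num : 0 < (2:ℝ≥0∞).toReal)
    rw [← NNReal.summable_coe]
    refine h.congr fun β => ?_
    rw [hrpow _ (norm_nonneg _)]
    push_cast
    rfl
  have hcoe2 : ∀ c : lp (fun _ : ι => ℂ) 2,
      ∑' β, ((‖(c : ∀ _ : ι, ℂ) β‖₊ : ℝ≥0∞)) ^ 2 =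
        ((∑' β, ‖(c : ∀ _ : ι, ℂ) β‖₊ ^ 2 : ℝ≥0) : ℝ≥0∞) := by
    intro c
    rw [ENNReal.coe_tsum (hc2 c)]
    exact tsum_congr fun β => by rw [ENNReal.coe_pow]
  have hF2 : ∀ c : lp (fun _ : ι => ℂ) 2,
      Summable fun α => ‖∑' β, A α β * (c : ∀ _ : ι, ℂ) β‖₊ ^ 2 := by
    intro c
    apply ENNReal.tsum_coe_ne_top_iff_summable.mp
    have hne : ∑' α, ((‖∑' β, A α β * (c : ∀ _ : ι, ℂ) β‖₊ : ℝ≥0∞)) ^ 2 ≠ ⊤ := by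
      refine ((keyest c).trans_lt ?_).ne
      rw [hcoe2 c]
      exact ENNReal.mul_lt_top (ENNReal.pow_lt_top ENNReal.coe_lt_top) ENNReal.coe_lt_top
    simpa [ENNReal.coe_pow] using hne
  have hmem : ∀ c : lp (fun _ : ι => ℂ) 2,
      Memℓp (fun α => ∑' β, A α β * (c : ∀ _ : ι, ℂ) β) 2 := by
    intro c
    apply memℓp_gen
    refine (NNReal.summable_coe.mpr (hF2 c)).congr fun α => ?_
    rw [hrpow _ (norm_nonneg _)]
    push_cast
    rfl
  have hnn : ∀ c : lp (fun _ : ι => ℂ) 2,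
      (∑' α, ‖∑' β, A α β * (c : ∀ _ : ι, ℂ) β‖₊ ^ 2 : ℝ≥0) ≤
        S ^ 2 * ∑' β, ‖(c : ∀ _ : ι, ℂ) β‖₊ ^ 2 := by
    intro c
    have h := keyest c
    rw [hcoe2 c] at h
    have hL : ∑' α, ((‖∑' β, A α β * (c : ∀ _ : ι, ℂ) β‖₊ : ℝ≥0∞)) ^ 2 =
        ((∑' α, ‖∑' β, A α β * (c : ∀ _ : ι, ℂ) β‖₊ ^ 2 : ℝ≥0) : ℝ≥0∞) := by
      rw [ENNReal.coe_tsum (hF2 c)]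
      exact tsum_congr fun α => by rw [ENNReal.coe_pow]
    rw [hL] at h
    exact_mod_cast h
  let Fl : lp (fun _ : ι => ℂ) 2 →ₗ[ℂ] lp (fun _ : ι => ℂ) 2 :=
    { toFun := fun c => ⟨fun α => ∑' β, A α β * (c : ∀ _ : ι, ℂ) β, hmem c⟩
      map_add' := by
        intro c c'
        apply lp.ext
        funext α
        have h2 : ((⟨fun α => ∑' β, A α β * (c : ∀ _ : ι, ℂ) β, hmem c⟩ +
            ⟨fun α => ∑' β, A α β * (c' : ∀ _ : ι, ℂ) β, hmem c'⟩ : lp (fun _ : ι => ℂ) 2) :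
              ∀ _ : ι, ℂ) α =
            (∑' β, A α β * (c : ∀ _ : ι, ℂ) β) + ∑' β, A α β * (c' : ∀ _ : ι, ℂ) β := rfl
        rw [h2]
        show (∑' β, A α β * ((c + c' : lp (fun _ : ι => ℂ) 2) : ∀ _ : ι, ℂ) β) = _
        rw [lp.coeFn_add]
        rw [← Summable.tsum_add (hsum c α) (hsum c' α)]
        exact tsum_congr fun β => by simp [Pi.add_apply, mul_add]
      map_smul' := by
        intro s c
        apply lp.ext
        funext α
        have h2 : ((s • (⟨fun α => ∑' β, A α β * (c : ∀ _ : ι, ℂ) β, hmem c⟩ :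
            lp (fun _ : ι => ℂ) 2)) : ∀ _ : ι, ℂ) α =
            s * ∑' β, A α β * (c : ∀ _ : ι, ℂ) β := rfl
        show (∑' β, A α β * ((s • c : lp (fun _ : ι => ℂ) 2) : ∀ _ : ι, ℂ) β) = _
        rw [lp.coeFn_smul]
        have hmul : (∑' β, A α β * (s • (c : ∀ _ : ι, ℂ)) β) =
            s * ∑' β, A α β * (c : ∀ _ : ι, ℂ) β := by
          rw [← tsum_mul_left]
          exact tsum_congr fun β => by
            simp only [Pi.smul_apply, smul_eq_mul]; ring
        rw [hmul]
        exact h2.symm }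
  have hbound : ∀ c : lp (fun _ : ι => ℂ) 2, ‖Fl c‖ ≤ (S : ℝ) * ‖c‖ := by
    intro c
    apply lp.norm_le_of_tsum_le (by norm_num : 0 < (2:ℝ≥0∞).toReal)
      (by positivity)
    have hsums : ∑' α, ‖(Fl c : ∀ _ : ι, ℂ) α‖ ^ (2:ℝ≥0∞).toReal =
        ((∑' α, ‖∑' β, A α β * (c : ∀ _ : ι, ℂ) β‖₊ ^ 2 : ℝ≥0) : ℝ) := by
      rw [NNReal.coe_tsum]
      refine tsum_congr fun α => ?_
      rw [hrpow _ (norm_nonneg _)]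
      push_cast
      rfl
    rw [hsums]
    have hC : ((S : ℝ) * ‖c‖) ^ (2:ℝ≥0∞).toReal = (S : ℝ) ^ 2 * ‖c‖ ^ (2:ℝ≥0∞).toReal := by
      rw [hrpow _ (by positivity), hrpow _ (norm_nonneg _), mul_pow]
    rw [hC]
    have hcnorm : ‖c‖ ^ (2:ℝ≥0∞).toReal =
        ((∑' β, ‖(c : ∀ _ : ι, ℂ) β‖₊ ^ 2 : ℝ≥0) : ℝ) := by
      rw [lp.norm_rpow_eq_tsum (by norm_num : 0 < (2:ℝ≥0∞).toReal), NNReal.coe_tsum]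
      refine tsum_congr fun β => ?_
      rw [hrpow _ (norm_nonneg _)]
      push_cast
      rfl
    rw [hcnorm]
    have := hnn c
    calc ((∑' α, ‖∑' β, A α β * (c : ∀ _ : ι, ℂ) β‖₊ ^ 2 : ℝ≥0) : ℝ)
        ≤ ((S ^ 2 * ∑' β, ‖(c : ∀ _ : ι, ℂ) β‖₊ ^ 2 : ℝ≥0) : ℝ) := by exact_mod_cast this
      _ = (S : ℝ) ^ 2 * ((∑' β, ‖(c : ∀ _ : ι, ℂ) β‖₊ ^ 2 : ℝ≥0) : ℝ) := by push_cast; ring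
  refine ⟨Fl.mkContinuous (S : ℝ) hbound, fun c α => rfl, ?_⟩
  exact Fl.mkContinuous_norm_le (by positivity) hbound

/-- Coordinate evaluation as a continuous linear functional on `ℓ²`. -/
noncomputable def coordCLM (α : ι) : lp (fun _ : ι => ℂ) 2 →L[ℂ] ℂ :=
  LinearMap.mkContinuous
    { toFun := fun c => (c : ∀ _ : ι, ℂ) α
      map_add' := fun c c' => by
        show ((c + c' : lp (fun _ : ι => ℂ) 2) : ∀ _ : ι, ℂ) α = _
        rw [lp.coeFn_add]; rfl
      map_smul' := fun s c => by
        show ((s • c : lp (fun _ : ι => ℂ) 2) : ∀ _ : ι, ℂ) α = _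
        rw [lp.coeFn_smul]; rfl }
    1 (fun c => by
      simpa using lp.norm_apply_le_norm (by norm_num : (2:ℝ≥0∞) ≠ 0) c α)

@[simp] lemma coordCLM_apply (α : ι) (c : lp (fun _ : ι => ℂ) 2) :
    coordCLM α c = (c : ∀ _ : ι, ℂ) α := rfl

/-- A rank-one operator is compact. -/
lemma isCompactOperator_smulRight {E F : Type*} [NormedAddCommGroup E] [NormedSpace ℂ E]
    [NormedAddCommGroup F] [NormedSpace ℂ F] (ℓ : E →L[ℂ] ℂ) (v : F) :
    IsCompactOperator (ℓ.smulRight v) := by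
  refine ⟨(fun z : ℂ => z • v) '' Metric.closedBall 0 (‖ℓ‖ + 1), ?_, ?_⟩
  · exact (isCompact_closedBall 0 _).image (continuous_id.smul continuous_const)
  · refine Filter.mem_of_superset (Metric.ball_mem_nhds 0 one_pos) ?_
    intro x hx
    refine ⟨ℓ x, ?_, rfl⟩
    rw [Metric.mem_closedBall, dist_zero_right]
    calc ‖ℓ x‖ ≤ ‖ℓ‖ * ‖x‖ := ℓ.le_opNorm x
      _ ≤ ‖ℓ‖ * 1 := by
          apply mul_le_mul_of_nonneg_left (le_of_lt ?_) (norm_nonneg ℓ)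
          simpa [dist_zero_right] using hx
      _ ≤ ‖ℓ‖ + 1 := by linarith [norm_nonneg ℓ]

end Aux

lemma jb_one_le {d : ℕ} (v : EuclideanSpace ℝ (Fin (2 * d))) : 1 ≤ jb v := by
  rw [jb]
  calc (1:ℝ) = Real.sqrt 1 := by simp
    _ ≤ Real.sqrt (1 + ‖v‖ ^ 2) := Real.sqrt_le_sqrt (by nlinarith [sq_nonneg ‖v‖])

lemma jb_pos {d : ℕ} (v : EuclideanSpace ℝ (Fin (2 * d))) : 0 < jb v :=
  lt_of_lt_of_le one_pos (jb_one_le v)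

lemma summable_inv_one_add_sq : Summable fun m : ℤ => ((1:ℝ) + (m:ℝ)^2)⁻¹ := by
  have h1 : Summable fun m : ℤ => 1 / (m:ℝ)^2 := summable_one_div_int_pow.mpr one_lt_two
  have h2 : Summable fun m : ℤ => (if m = 0 then (1:ℝ) else 0) := by
    apply summable_of_ne_finset_zero (s := {0})
    intro m hm
    simp only [Finset.mem_singleton] at hm
    simp [hm]
  refine Summable.of_nonneg_of_le (fun m => by positivity) (fun m => ?_) (h1.add h2)
  by_cases hm : m = 0
  · simp [hm]
  · have hm2 : (1:ℝ) ≤ (m:ℝ)^2 := by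
      have : (1:ℝ) ≤ |(m:ℝ)| := by
        rw [← Int.cast_abs]
        exact_mod_cast Int.one_le_abs (by exact_mod_cast hm)
      calc (1:ℝ) ≤ |(m:ℝ)| := this
        _ ≤ |(m:ℝ)|^2 := le_self_pow₀ (by linarith) (by norm_num)
        _ = (m:ℝ)^2 := sq_abs _
    simp only [hm, if_false, add_zero]
    rw [one_div]
    apply inv_anti₀ (by positivity)
    linarith

lemma tsum_pi_prod (k : ℕ) (g : ℤ → ℝ≥0∞) :
    ∑' γ : Fin k → ℤ, ∏ i, g (γ i) = (∑' m, g m) ^ k := by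
  induction k with
  | zero =>
    rw [pow_zero]
    rw [tsum_eq_single (fun i => i.elim0) (fun b hb => absurd (Subsingleton.elim b _) hb)]
    simp
  | succ n ih =>
    rw [← (Fin.consEquiv (fun _ : Fin (n+1) => ℤ)).tsum_eq]
    have hcons : ∀ p : ℤ × (Fin n → ℤ),
        (∏ i, g ((Fin.consEquiv (fun _ : Fin (n+1) => ℤ)) p i)) =
          g p.1 * ∏ i : Fin n, g (p.2 i) := by
      intro p
      rw [Fin.prod_univ_succ]
      simp [Fin.consEquiv]
    rw [tsum_congr hcons, ENNReal.tsum_prod']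
    simp_rw [ENNReal.tsum_mul_left]
    rw [ENNReal.tsum_mul_right, ih, pow_succ]
    ring

lemma coord_sq_le {d : ℕ} (γ : Fin (2 * d) → ℤ) (i : Fin (2 * d)) :
    ((γ i : ℝ)) ^ 2 ≤ ‖latt2 γ‖ ^ 2 := by
  have hcoordsum : ‖latt2 γ‖ ^ 2 = ∑ j, ((γ j : ℝ)) ^ 2 := by
    rw [EuclideanSpace.norm_eq, Real.sq_sqrt (by positivity)]
    exact Finset.sum_congr rfl fun j _ => by rw [Real.norm_eq_abs, sq_abs]; simp [latt2]
  rw [hcoordsum]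
  exact Finset.single_le_sum (f := fun j => ((γ j : ℝ)) ^ 2)
    (fun j _ => by positivity) (Finset.mem_univ i)

lemma jb_prod_bound {d : ℕ} (γ : Fin (2 * d) → ℤ) :
    ENNReal.ofReal (jb (latt2 γ) ^ (-((4 * d : ℕ) : ℝ))) ≤
      ∏ i, ENNReal.ofReal (((1:ℝ) + ((γ i : ℝ))^2)⁻¹) := by
  set Q : ℝ := 1 + ‖latt2 γ‖ ^ 2 with hQ
  have hQ1 : (1:ℝ) ≤ Q := by nlinarith [sq_nonneg ‖latt2 γ‖]
  have hQ0 : (0:ℝ) ≤ Q := by linarith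
  have hjb : jb (latt2 γ) ^ (-((4 * d : ℕ) : ℝ)) = (Q ^ (2 * d))⁻¹ := by
    rw [jb, ← hQ, Real.sqrt_eq_rpow, ← Real.rpow_natCast Q (2*d), ← Real.rpow_neg hQ0,
      ← Real.rpow_mul hQ0]
    congr 1
    push_cast
    ring
  have hprod : (∏ i, ((1:ℝ) + (γ i : ℝ) ^ 2)) ≤ Q ^ (2 * d) := by
    have hb : ∀ i ∈ Finset.univ, (1:ℝ) + (γ i : ℝ) ^ 2 ≤ Q := by
      intro i _
      have hc := coord_sq_le γ i
      simp only [hQ]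
      linarith
    calc (∏ i, ((1:ℝ) + (γ i : ℝ) ^ 2))
        ≤ ∏ _i : Fin (2 * d), Q := Finset.prod_le_prod (fun i _ => by positivity) hb
      _ = Q ^ (2 * d) := by rw [Finset.prod_const, Finset.card_univ, Fintype.card_fin]
  rw [hjb]
  have hflip : (Q ^ (2 * d))⁻¹ ≤ (∏ i, ((1:ℝ) + (γ i : ℝ) ^ 2))⁻¹ :=
    inv_anti₀ (by positivity) hprod
  refine le_trans (ENNReal.ofReal_le_ofReal hflip) (le_of_eq ?_)
  rw [← Finset.prod_inv_distrib]
  exact ENNReal.ofReal_prod_of_nonneg (fun i _ => by positivity)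

lemma sum_w_lt_top {d : ℕ} :
    ∑' γ : Fin (2 * d) → ℤ, ENNReal.ofReal (jb (latt2 γ) ^ (-((4 * d : ℕ) : ℝ))) < ⊤ := by
  calc ∑' γ : Fin (2 * d) → ℤ, ENNReal.ofReal (jb (latt2 γ) ^ (-((4 * d : ℕ) : ℝ)))
      ≤ ∑' γ : Fin (2 * d) → ℤ, ∏ i, ENNReal.ofReal (((1:ℝ) + ((γ i : ℝ))^2)⁻¹) :=
        ENNReal.tsum_le_tsum fun γ => jb_prod_bound γ
    _ = (∑' m : ℤ, ENNReal.ofReal (((1:ℝ) + ((m : ℝ))^2)⁻¹)) ^ (2 * d) :=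
        tsum_pi_prod (2 * d) (fun m : ℤ => ENNReal.ofReal (((1:ℝ) + (m:ℝ)^2)⁻¹))
    _ < ⊤ := by
        apply ENNReal.pow_lt_top
        rw [← ENNReal.ofReal_tsum_of_nonneg (fun m => by positivity) summable_inv_one_add_sq]
        exact ENNReal.ofReal_lt_top

lemma finite_latt_ball {d : ℕ} (R : ℝ) :
    {α : Fin (2 * d) → ℤ | ‖latt2 α‖ < R}.Finite := by
  have hsub : {α : Fin (2 * d) → ℤ | ‖latt2 α‖ < R} ⊆
      Set.pi Set.univ (fun _ : Fin (2 * d) => Set.Icc (-(⌈R⌉ : ℤ)) ⌈R⌉) := by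
    intro α hα i _
    simp only [Set.mem_Icc, ← abs_le]
    have h1 : |(α i : ℝ)| ≤ ‖latt2 α‖ := by
      have h2 := Real.sqrt_le_sqrt (coord_sq_le α i)
      rwa [Real.sqrt_sq_eq_abs, Real.sqrt_sq (norm_nonneg _)] at h2
    have h3 : |(α i : ℝ)| ≤ (⌈R⌉ : ℝ) :=
      h1.trans (le_trans (le_of_lt hα) (Int.le_ceil R))
    rw [← Int.cast_abs] at h3
    exact_mod_cast h3
  exact (Set.Finite.pi (fun i => Set.finite_Icc _ _)).subset hsub

set_option maxHeartbeats 1000000 in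
/-- Compactness from matrix decay: if `M` is a tempered weight tending to `0`
at infinity and `|K_{αβ}| ≤ C_n ⟨α-β⟩^{-n} M(α)` for every `n`, then the induced
operator on `ℓ²(ℤ^{2d})` is compact. -/
theorem stmt14 {d : ℕ}
    (M : EuclideanSpace ℝ (Fin (2 * d)) → ℝ)
    (hMpos : ∀ u, 0 < M u)
    (hMtemp : ∃ a C : ℝ, 0 < a ∧ 0 < C ∧ ∀ u v, M (u + v) ≤ C * M u * jb v ^ a)
    (hMdecay : ∀ ε : ℝ, 0 < ε → ∃ R : ℝ, ∀ u, R ≤ ‖u‖ → M u < ε)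
    (K : (Fin (2 * d) → ℤ) → (Fin (2 * d) → ℤ) → ℂ)
    (hK : ∀ n : ℕ, ∃ Cn : ℝ, 0 < Cn ∧ ∀ α β : Fin (2 * d) → ℤ,
      ‖K α β‖ ≤ Cn * jb (latt2 α - latt2 β) ^ (-(n : ℝ)) * M (latt2 α)) :
    ∃ T : lp (fun _ : Fin (2 * d) → ℤ => ℂ) 2 →L[ℂ] lp (fun _ : Fin (2 * d) → ℤ => ℂ) 2,
      (∀ (c : lp (fun _ : Fin (2 * d) → ℤ => ℂ) 2) (α : Fin (2 * d) → ℤ),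
        (T c : ∀ _ : Fin (2 * d) → ℤ, ℂ) α =
          ∑' β : Fin (2 * d) → ℤ, K α β * (c : ∀ _ : Fin (2 * d) → ℤ, ℂ) β) ∧
      IsCompactOperator T := by
  classical
  obtain ⟨a, C, ha, hC, htemp⟩ := hMtemp
  obtain ⟨R₁, hR₁⟩ := hMdecay 1 one_pos
  set B : ℝ := max 1 (C * M 0 * Real.sqrt (1 + (max R₁ 0) ^ 2) ^ a) with hBdef
  have hB1 : (1:ℝ) ≤ B := le_max_left _ _
  have hB0 : (0:ℝ) < B := lt_of_lt_of_le one_pos hB1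
  have hMB : ∀ u, M u ≤ B := by
    intro u
    rcases le_or_gt R₁ ‖u‖ with h | h
    · exact le_trans (hR₁ u h).le hB1
    · refine le_trans ?_ (le_max_right _ _)
      have h0 := htemp 0 u
      rw [zero_add] at h0
      refine h0.trans ?_
      have hjble : jb u ≤ Real.sqrt (1 + (max R₁ 0) ^ 2) := by
        rw [jb]
        apply Real.sqrt_le_sqrt
        have h1 : ‖u‖ ≤ max R₁ 0 := le_trans h.le (le_max_left _ _)
        nlinarith [norm_nonneg u, le_max_right R₁ 0]
      have hjb2 : jb u ^ a ≤ Real.sqrt (1 + (max R₁ 0) ^ 2) ^ a :=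
        Real.rpow_le_rpow (jb_pos u).le hjble ha.le
      exact mul_le_mul_of_nonneg_left hjb2 (mul_nonneg hC.le (hMpos 0).le)
  obtain ⟨C₀, hC₀, hKb⟩ := hK (4 * d)
  set w : (Fin (2 * d) → ℤ) → ℝ≥0∞ :=
    fun γ => ENNReal.ofReal (jb (latt2 γ) ^ (-((4 * d : ℕ) : ℝ))) with hwdef
  have hSig : ∑' γ, w γ < ⊤ := by
    rw [hwdef]
    exact sum_w_lt_top
  set Sig0 : ℝ≥0∞ := ∑' γ, w γ with hSigdef
  have hSig0 : (0:ℝ) ≤ Sig0.toReal := ENNReal.toReal_nonneg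
  have hlatt : ∀ α β : Fin (2 * d) → ℤ, latt2 α - latt2 β = latt2 (α - β) := by
    intro α β
    ext i
    simp [latt2]
  have hKer : ∀ α β, (‖K α β‖₊ : ℝ≥0∞) ≤ ENNReal.ofReal (C₀ * M (latt2 α)) * w (α - β) := by
    intro α β
    rw [← ENNReal.ofReal_coe_nnreal, coe_nnnorm,
      ← ENNReal.ofReal_mul (mul_nonneg hC₀.le (hMpos _).le)]
    apply ENNReal.ofReal_le_ofReal
    have h := hKb α β
    rw [hlatt α β] at h
    calc ‖K α β‖ ≤ C₀ * jb (latt2 (α - β)) ^ (-((4 * d : ℕ) : ℝ)) * M (latt2 α) := h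
      _ = C₀ * M (latt2 α) * jb (latt2 (α - β)) ^ (-((4 * d : ℕ) : ℝ)) := by ring
  have hrowcol : ∀ (P : (Fin (2 * d) → ℤ) → Prop) (t : ℝ), 0 ≤ t →
      (∀ α, P α → M (latt2 α) ≤ t) →
      (∀ α, ∑' β, (‖(if P α then K α β else 0 : ℂ)‖₊ : ℝ≥0∞) ≤
          ENNReal.ofReal (C₀ * t) * Sig0) ∧
      (∀ β, ∑' α, (‖(if P α then K α β else 0 : ℂ)‖₊ : ℝ≥0∞) ≤
          ENNReal.ofReal (C₀ * t) * Sig0) := by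
    intro P t ht hMt
    have hterm : ∀ α β, (‖(if P α then K α β else 0 : ℂ)‖₊ : ℝ≥0∞) ≤
        ENNReal.ofReal (C₀ * t) * w (α - β) := by
      intro α β
      by_cases hP : P α
      · rw [if_pos hP]
        refine (hKer α β).trans (mul_le_mul' (ENNReal.ofReal_le_ofReal ?_) le_rfl)
        exact mul_le_mul_of_nonneg_left (hMt α hP) hC₀.le
      · rw [if_neg hP]; simp
    constructor
    · intro α
      calc ∑' β, (‖(if P α then K α β else 0 : ℂ)‖₊ : ℝ≥0∞)
          ≤ ∑' β, ENNReal.ofReal (C₀ * t) * w (α - β) :=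
            ENNReal.tsum_le_tsum fun β => hterm α β
        _ = ENNReal.ofReal (C₀ * t) * ∑' β, w (α - β) := ENNReal.tsum_mul_left
        _ = ENNReal.ofReal (C₀ * t) * Sig0 := by
            rw [hSigdef]
            congr 1
            exact (Equiv.subLeft α).tsum_eq w
    · intro β
      calc ∑' α, (‖(if P α then K α β else 0 : ℂ)‖₊ : ℝ≥0∞)
          ≤ ∑' α, ENNReal.ofReal (C₀ * t) * w (α - β) :=
            ENNReal.tsum_le_tsum fun α => hterm α β
        _ = ENNReal.ofReal (C₀ * t) * ∑' α, w (α - β) := ENNReal.tsum_mul_left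
        _ = ENNReal.ofReal (C₀ * t) * Sig0 := by
            rw [hSigdef]
            congr 1
            exact (Equiv.subRight β).tsum_eq w
  have hSfin : ∀ t : ℝ, ENNReal.ofReal (C₀ * t) * Sig0 ≠ ⊤ :=
    fun t => ENNReal.mul_ne_top ENNReal.ofReal_ne_top hSig.ne
  obtain ⟨hrowB, hcolB⟩ := hrowcol (fun _ => True) B hB0.le (fun α _ => hMB _)
  have hif : ∀ α β : Fin (2 * d) → ℤ,
      (if True then K α β else 0 : ℂ) = K α β := fun α β => if_pos trivial
  have hrowB' : ∀ α, ∑' β, (‖K α β‖₊ : ℝ≥0∞) ≤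
      ((ENNReal.ofReal (C₀ * B) * Sig0).toNNReal : ℝ≥0∞) := by
    intro α
    rw [ENNReal.coe_toNNReal (hSfin B)]
    refine le_trans (le_of_eq ?_) (hrowB α)
    exact tsum_congr fun β => by simp
  have hcolB' : ∀ β, ∑' α, (‖K α β‖₊ : ℝ≥0∞) ≤
      ((ENNReal.ofReal (C₀ * B) * Sig0).toNNReal : ℝ≥0∞) := by
    intro β
    rw [ENNReal.coe_toNNReal (hSfin B)]
    refine le_trans (le_of_eq ?_) (hcolB β)
    exact tsum_congr fun α => by simp
  obtain ⟨T, hTfor, _⟩ := schur_exists K _ hrowB' hcolB'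
  refine ⟨T, hTfor, ?_⟩
  suffices hT : T ∈ closure {U : lp (fun _ : Fin (2 * d) → ℤ => ℂ) 2 →L[ℂ]
      lp (fun _ : Fin (2 * d) → ℤ => ℂ) 2 | IsCompactOperator U} by
    exact isClosed_setOf_isCompactOperator.closure_subset hT
  rw [Metric.mem_closure_iff]
  intro ε hε
  set t : ℝ := ε / (2 * (C₀ * Sig0.toReal + 1)) with htdef
  have hden : (0:ℝ) < 2 * (C₀ * Sig0.toReal + 1) := by nlinarith
  have ht : 0 < t := div_pos hε hden
  obtain ⟨R, hR⟩ := hMdecay t ht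
  set P : (Fin (2 * d) → ℤ) → Prop := fun α => R ≤ ‖latt2 α‖ with hPdef
  obtain ⟨hrowt, hcolt⟩ := hrowcol P t ht.le (fun α hα => (hR (latt2 α) hα).le)
  have hrowt' : ∀ α, ∑' β, (‖(if P α then K α β else 0 : ℂ)‖₊ : ℝ≥0∞) ≤
      ((ENNReal.ofReal (C₀ * t) * Sig0).toNNReal : ℝ≥0∞) := by
    intro α; rw [ENNReal.coe_toNNReal (hSfin t)]; exact hrowt α
  have hcolt' : ∀ β, ∑' α, (‖(if P α then K α β else 0 : ℂ)‖₊ : ℝ≥0∞) ≤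
      ((ENNReal.ofReal (C₀ * t) * Sig0).toNNReal : ℝ≥0∞) := by
    intro β; rw [ENNReal.coe_toNNReal (hSfin t)]; exact hcolt β
  obtain ⟨Tt, hTtf, hTtnorm⟩ :=
    schur_exists (fun α β => if P α then K α β else 0) _ hrowt' hcolt'
  set F : Finset (Fin (2 * d) → ℤ) := (finite_latt_ball R).toFinset with hFdef
  have hFmem : ∀ γ, γ ∈ F ↔ ¬ P γ := by
    intro γ
    rw [hFdef, Set.Finite.mem_toFinset, hPdef]
    simp [Set.mem_setOf_eq, not_le]
  have hcompact : ∀ s : Finset (Fin (2 * d) → ℤ),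
      IsCompactOperator
        (⇑(∑ α ∈ s, ((coordCLM α).comp T).smulRight (lp.single 2 α (1:ℂ)))) := by
    intro s
    induction s using Finset.induction_on with
    | empty => simpa using isCompactOperator_zero
    | insert _ _ hα ih =>
      rw [Finset.sum_insert hα, ContinuousLinearMap.coe_add']
      exact (isCompactOperator_smulRight _ _).add ih
  set Thead := ∑ α ∈ F, ((coordCLM α).comp T).smulRight (lp.single 2 α (1:ℂ)) with hTh
  refine ⟨Thead, hcompact F, ?_⟩
  have hdiff : T - Thead = Tt := by
    ext c γ
    have h1 : ((T - Thead) c : ∀ _ : Fin (2 * d) → ℤ, ℂ) γ =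
        (T c : ∀ _ : Fin (2 * d) → ℤ, ℂ) γ - (Thead c : ∀ _ : Fin (2 * d) → ℤ, ℂ) γ := by
      rw [ContinuousLinearMap.sub_apply, lp.coeFn_sub]
      rfl
    have h2 : (Thead c : ∀ _ : Fin (2 * d) → ℤ, ℂ) γ =
        if γ ∈ F then (T c : ∀ _ : Fin (2 * d) → ℤ, ℂ) γ else 0 := by
      rw [hTh, ContinuousLinearMap.sum_apply, lp.coeFn_sum, Finset.sum_apply]
      have hterm : ∀ α, ((((coordCLM α).comp T).smulRight (lp.single 2 α (1:ℂ))) c :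
          ∀ _ : Fin (2 * d) → ℤ, ℂ) γ =
          (T c : ∀ _ : Fin (2 * d) → ℤ, ℂ) α *
          (Pi.single (M := fun _ : Fin (2 * d) → ℤ => ℂ) α (1:ℂ) γ) := by
        intro α
        rw [ContinuousLinearMap.smulRight_apply, lp.coeFn_smul, Pi.smul_apply,
          lp.single_apply, ContinuousLinearMap.comp_apply, coordCLM_apply, smul_eq_mul]
      rw [Finset.sum_congr rfl (fun α _ => hterm α)]
      by_cases hγ : γ ∈ F
      · rw [if_pos hγ]
        rw [Finset.sum_eq_single γ]
        · rw [Pi.single_eq_same, mul_one]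
        · intro α _ hαγ
          rw [Pi.single_eq_of_ne (Ne.symm hαγ), mul_zero]
        · intro hγ'
          exact absurd hγ hγ'
      · rw [if_neg hγ]
        apply Finset.sum_eq_zero
        intro α hαF
        have hne : γ ≠ α := fun he => hγ (he ▸ hαF)
        rw [Pi.single_eq_of_ne hne, mul_zero]
    rw [h1, h2, hTtf c γ, hTfor c γ]
    by_cases hP : P γ
    · rw [if_neg (fun hγF => ((hFmem γ).mp hγF) hP), sub_zero]
      exact tsum_congr fun β => by rw [if_pos hP]
    · rw [if_pos ((hFmem γ).mpr hP), sub_self]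
      symm
      have : ∀ β, (if P γ then K γ β else 0 : ℂ) * (c : ∀ _ : Fin (2 * d) → ℤ, ℂ) β = 0 := by
        intro β
        rw [if_neg hP, zero_mul]
      rw [tsum_congr this, tsum_zero]
  rw [dist_eq_norm, hdiff]
  calc ‖Tt‖ ≤ (((ENNReal.ofReal (C₀ * t) * Sig0).toNNReal : ℝ≥0) : ℝ) := hTtnorm
    _ = (ENNReal.ofReal (C₀ * t) * Sig0).toReal := rfl
    _ = (C₀ * t) * Sig0.toReal := by
        rw [ENNReal.toReal_mul, ENNReal.toReal_ofReal (by positivity)]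
    _ < ε := by
        have heq : C₀ * (ε / (2 * (C₀ * Sig0.toReal + 1))) * Sig0.toReal =
            (C₀ * Sig0.toReal) * ε / (2 * (C₀ * Sig0.toReal + 1)) := by ring
        rw [htdef, heq, div_lt_iff₀ hden]
        nlinarith [mul_nonneg (mul_nonneg hC₀.le hSig0) hε.le]
end

section
/- (Schatten-class from matrix decay, p ≤ 2) Let p ∈ (0,2], let M : ℝ^{2d} → (0,∞) be a tempered weight with Σ_{\tilde γ ∈ ℤ^{2d}} M(\tilde γ)^p < ∞, let (f_{\tilde γ})_{\tilde γ ∈ ℤ^{2d}} be a Parseval frame in a Hilbert space H, and let T be a bounded operator on H such that for every n ∈ ℕ there is C_n with |⟨f_{\tilde α}, T f_{\tilde γ}⟩| ≤ C_n ⟨\tilde α − \tilde γ⟩^{−n} M(\tilde γ) for all \tilde α, \tilde γ. Then Σ_{\tilde γ} ‖T f_{\tilde γ}‖^p < ∞; in particular, using that Σ_n ‖T f_n‖^p < ∞ over a frame characterizes the Schatten class 𝓑_p for p ∈ (0,2], T belongs to 𝓑_p(H). -/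
open Real

-- 1D lattice summability
lemma sum1d {t : ℝ} (ht : 1 < t) :
    Summable (fun m : ℤ => (1 + (m : ℝ) ^ 2) ^ (-t)) := by
  have key : Summable (fun m : ℤ => (1 + |(m : ℝ)|) ^ (-t)) := by
    have hnat : Summable (fun n : ℕ => ((n : ℝ) + 1) ^ (-t)) := by
      have h := (summable_nat_add_iff (f := fun n : ℕ => (n : ℝ) ^ (-t)) 1).2
        (Real.summable_nat_rpow.mpr (by linarith))
      refine h.congr fun n => ?_
      push_cast
      ring_nf
    apply Summable.of_nat_of_neg
    · refine hnat.congr fun n => ?_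
      rw [Int.cast_natCast, abs_of_nonneg (by positivity : (0:ℝ) ≤ (n:ℝ))]
      ring_nf
    · refine hnat.congr fun n => ?_
      push_cast
      rw [abs_neg, abs_of_nonneg (by positivity : (0:ℝ) ≤ (n:ℝ))]
      ring_nf
  refine Summable.of_nonneg_of_le (fun m => Real.rpow_nonneg (by positivity) _)
    (fun m => ?_) key
  have habs : |(m : ℝ)| ≤ (m : ℝ) ^ 2 := by
    rcases eq_or_ne m 0 with h | h
    · simp [h]
    · have h1 : (1 : ℤ) ≤ |m| := Int.one_le_abs (by exact_mod_cast h)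
      have h1' : (1 : ℝ) ≤ |(m : ℝ)| := by
        rw [← Int.cast_abs]
        exact_mod_cast h1
      nlinarith [sq_abs (m : ℝ)]
  exact Real.rpow_le_rpow_of_nonpos (by positivity) (by linarith) (by linarith)

-- Pi summability
lemma sum_pi {k : ℕ} {g : ℤ → ℝ} (h0 : ∀ m, 0 ≤ g m) (hg : Summable g) :
    Summable (fun α : Fin k → ℤ => ∏ i, g (α i)) := by
  induction k with
  | zero =>
      have he : (fun α : Fin 0 → ℤ => ∏ i, g (α i)) = fun _ => 1 := by
        funext α; simp
      rw [he]
      haveI : Unique (Fin 0 → ℤ) := ⟨⟨fun i => i.elim0⟩, fun a => funext fun i => i.elim0⟩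
      haveI : Finite (Fin 0 → ℤ) := Finite.of_subsingleton
      exact Summable.of_finite
  | succ k ih =>
      have hprod : Summable (fun x : ℤ × (Fin k → ℤ) => g x.1 * ∏ i, g (x.2 i)) := by
        apply Summable.mul_of_nonneg hg ih
        · exact h0
        · exact fun β => Finset.prod_nonneg fun i _ => h0 _
      have := (Fin.consEquiv (fun _ : Fin (k+1) => ℤ)).summable_iff
        (f := fun α : Fin (k+1) → ℤ => ∏ i, g (α i))
      refine this.mp ?_
      refine hprod.congr fun x => ?_
      show g x.1 * ∏ i, g (x.2 i) = ∏ i, g ((Fin.cons x.1 x.2 : Fin (k+1) → ℤ) i)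
      rw [Fin.prod_univ_succ]
      simp

-- product bound
lemma prod_bound {k : ℕ} (v : EuclideanSpace ℝ (Fin k)) {s : ℝ} (hs : 0 ≤ s) :
    (1 + ‖v‖ ^ 2) ^ (-s) ≤ ∏ i, (1 + (v i) ^ 2) ^ (-(s / k)) := by
  have hnorm : ‖v‖ ^ 2 = ∑ i, (v i) ^ 2 := by
    rw [EuclideanSpace.norm_eq, Real.sq_sqrt (by positivity)]
    exact Finset.sum_congr rfl fun i _ => by rw [Real.norm_eq_abs, sq_abs]
  rcases Nat.eq_zero_or_pos k with hk | hk
  · subst hk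
    simp only [Finset.univ_eq_empty, Finset.prod_empty]
    have : ‖v‖ ^ 2 = 0 := by rw [hnorm]; simp
    rw [this]
    norm_num
  have h1 : ∏ i, (1 + (v i) ^ 2) ≤ (1 + ‖v‖ ^ 2) ^ (k : ℕ) := by
    rw [hnorm]
    calc ∏ i, (1 + (v i) ^ 2) ≤ ∏ _i : Fin k, (1 + ∑ j, (v j) ^ 2) := by
          refine Finset.prod_le_prod (fun i _ => by positivity) (fun i _ => ?_)
          have := Finset.single_le_sum (f := fun j => (v j) ^ 2)
            (fun j _ => sq_nonneg _) (Finset.mem_univ i)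
          have h2 : v i ^ 2 ≤ ∑ j, v j ^ 2 := by simpa using this
          linarith
      _ = (1 + ∑ j, (v j) ^ 2) ^ (k : ℕ) := by
          rw [Finset.prod_const, Finset.card_univ, Fintype.card_fin]
  have hb : (0:ℝ) < ∏ i, (1 + (v i) ^ 2) := Finset.prod_pos (fun i _ => by positivity)
  have hk' : (k : ℝ) ≠ 0 := by positivity
  have e1 : (1 + ‖v‖ ^ 2) ^ (-s) = ((1 + ‖v‖ ^ 2) ^ (k : ℕ)) ^ (-(s / k)) := by
    rw [← Real.rpow_natCast (1 + ‖v‖ ^ 2) k, ← Real.rpow_mul (by positivity)]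
    congr 1
    field_simp
  rw [e1]
  calc ((1 + ‖v‖ ^ 2) ^ (k : ℕ)) ^ (-(s / k)) ≤ (∏ i, (1 + (v i) ^ 2)) ^ (-(s / k)) :=
        Real.rpow_le_rpow_of_nonpos hb h1 (neg_nonpos.mpr (div_nonneg hs k.cast_nonneg))
    _ = ∏ i, (1 + (v i) ^ 2) ^ (-(s / k)) :=
        (Real.finset_prod_rpow _ _ (fun i _ => by positivity) _).symm


/-- Schatten-class criterion for `p ∈ (0,2]`: if `M` is a tempered weight with
`p`-summable lattice values, `(f_γ)` is a Parseval frame in `H`, and the matrix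
elements of the bounded operator `T` satisfy
`|⟨f_α, T f_γ⟩| ≤ C_n ⟨α-γ⟩^{-n} M(γ)` for every `n`, then
`Σ_γ ‖T f_γ‖^p < ∞` (so `T` is of Schatten class `𝓑_p` by Zhu's frame
characterization). -/
theorem stmt16 {d : ℕ} {H : Type*} [NormedAddCommGroup H] [InnerProductSpace ℂ H]
    [CompleteSpace H]
    (p : ℝ) (hp0 : 0 < p) (hp2 : p ≤ 2)
    (M : EuclideanSpace ℝ (Fin (2 * d)) → ℝ)
    (hMpos : ∀ u, 0 < M u)
    (hMtemp : ∃ a C : ℝ, 0 < a ∧ 0 < C ∧ ∀ u v, M (u + v) ≤ C * M u * jb v ^ a)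
    (hMsum : Summable (fun γ : Fin (2 * d) → ℤ => M (latt2 γ) ^ p))
    (f : (Fin (2 * d) → ℤ) → H)
    (hParseval : ∀ g : H, ‖g‖ ^ 2 = ∑' γ : Fin (2 * d) → ℤ, ‖(inner ℂ (f γ) g : ℂ)‖ ^ 2)
    (T : H →L[ℂ] H)
    (hT : ∀ n : ℕ, ∃ Cn : ℝ, 0 < Cn ∧ ∀ α γ : Fin (2 * d) → ℤ,
      ‖(inner ℂ (f α) (T (f γ)) : ℂ)‖ ≤
        Cn * jb (latt2 α - latt2 γ) ^ (-(n : ℝ)) * M (latt2 γ)) :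
    Summable (fun γ : Fin (2 * d) → ℤ => ‖T (f γ)‖ ^ p) := by
  rcases Nat.eq_zero_or_pos d with hd0 | hdpos
  · subst hd0
    haveI : Unique (Fin (2 * 0) → ℤ) :=
      ⟨⟨fun i => i.elim0⟩, fun a => funext fun i => i.elim0⟩
    haveI : Finite (Fin (2 * 0) → ℤ) := Finite.of_subsingleton
    exact Summable.of_finite
  -- main case
  set n : ℕ := ⌈(4 * (d : ℝ) + 4) / p⌉₊ with hn
  obtain ⟨Cn, hCn, hbound⟩ := hT n
  have hd' : (0:ℝ) < d := by exact_mod_cast hdpos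
  have hnp : 4 * (d : ℝ) < (n : ℝ) * p := by
    have h1 : (4 * (d : ℝ) + 4) / p ≤ (n : ℝ) := Nat.le_ceil _
    have h2 := (div_le_iff₀ hp0).mp h1
    linarith
  set t : ℝ := ((n : ℝ) * p / 2) / ((2 * d : ℕ) : ℝ) with ht_def
  have ht : 1 < t := by
    rw [ht_def, lt_div_iff₀ (by push_cast; positivity)]
    push_cast
    linarith
  set g : ℤ → ℝ := fun m => (1 + (m : ℝ) ^ 2) ^ (-t) with hg_def
  have hg0 : ∀ m, 0 ≤ g m := fun m => Real.rpow_nonneg (by positivity) _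
  have hgsum : Summable g := sum1d ht
  set G : (Fin (2 * d) → ℤ) → ℝ := fun β => ∏ i, g (β i) with hG_def
  have hGsum : Summable G := sum_pi hg0 hgsum
  have hG0 : ∀ β, 0 ≤ G β := fun β => Finset.prod_nonneg fun i _ => hg0 _
  set S : ℝ := ∑' β, G β with hS_def
  have hS0 : 0 ≤ S := tsum_nonneg hG0
  -- Japanese bracket bound
  have hjb : ∀ α γ' : Fin (2 * d) → ℤ,
      (jb (latt2 α - latt2 γ') ^ (-(n : ℝ))) ^ p ≤ G (α - γ') := by
    intro α γ'
    set v := latt2 α - latt2 γ' with hv_def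
    have hv2 : (0:ℝ) ≤ 1 + ‖v‖ ^ 2 := by positivity
    have e2 : (jb v ^ (-(n : ℝ))) ^ p = (1 + ‖v‖ ^ 2) ^ (-((n : ℝ) * p / 2)) := by
      rw [jb, Real.sqrt_eq_rpow, ← Real.rpow_mul hv2, ← Real.rpow_mul hv2]
      congr 1
      ring
    rw [e2]
    have hpb := prod_bound (k := 2 * d) v (s := (n : ℝ) * p / 2) (by positivity)
    refine hpb.trans_eq ?_
    refine Finset.prod_congr rfl fun i _ => ?_
    have hvi : v i = ((α i : ℝ) - (γ' i : ℝ)) := by rw [hv_def]; simp [latt2]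
    simp only [hg_def]
    rw [ht_def]
    congr 2
    rw [hvi]
    push_cast [Pi.sub_apply]
    ring
  -- pointwise estimate
  have key : ∀ γ', ‖T (f γ')‖ ^ p ≤ (Cn ^ p * S) * M (latt2 γ') ^ p := by
    intro γ'
    set b : (Fin (2 * d) → ℤ) → ℝ := fun α => ‖(inner ℂ (f α) (T (f γ')) : ℂ)‖ with hb_def
    have hb0 : ∀ α, 0 ≤ b α := fun α => norm_nonneg _
    have hMp : 0 < M (latt2 γ') := hMpos _
    have hble : ∀ α, b α ^ p ≤ (Cn ^ p * M (latt2 γ') ^ p) * G (α - γ') := by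
      intro α
      have hjbpos : 0 < jb (latt2 α - latt2 γ') := Real.sqrt_pos.mpr (by positivity)
      have h1 : b α ^ p ≤ (Cn * jb (latt2 α - latt2 γ') ^ (-(n : ℝ)) * M (latt2 γ')) ^ p :=
        Real.rpow_le_rpow (hb0 α) (hbound α γ') hp0.le
      calc b α ^ p ≤ _ := h1
        _ = Cn ^ p * (jb (latt2 α - latt2 γ') ^ (-(n : ℝ))) ^ p * M (latt2 γ') ^ p := by
            rw [Real.mul_rpow (by positivity) hMp.le, Real.mul_rpow hCn.le (by positivity)]
        _ ≤ Cn ^ p * G (α - γ') * M (latt2 γ') ^ p := by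
            refine mul_le_mul_of_nonneg_right (mul_le_mul_of_nonneg_left (hjb α γ') ?_) ?_
            · exact Real.rpow_nonneg hCn.le _
            · exact Real.rpow_nonneg hMp.le _
        _ = (Cn ^ p * M (latt2 γ') ^ p) * G (α - γ') := by ring
    have hGshift : Summable (fun α => G (α - γ')) :=
      (((Equiv.subRight γ').summable_iff (f := G)).mpr hGsum).congr
        (fun α => by simp [Equiv.subRight])
    have hbnd : Summable (fun α => (Cn ^ p * M (latt2 γ') ^ p) * G (α - γ')) :=
      hGshift.mul_left _
    have hSb : Summable (fun α => b α ^ p) :=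
      Summable.of_nonneg_of_le (fun α => Real.rpow_nonneg (hb0 α) p) hble hbnd
    set Sc := ∑' α, b α ^ p with hSc_def
    have hSc0 : 0 ≤ Sc := tsum_nonneg fun α => Real.rpow_nonneg (hb0 α) p
    have htsum_shift : ∑' α, G (α - γ') = S := by
      rw [hS_def, ← (Equiv.subRight γ').tsum_eq G]
      exact tsum_congr fun α => by simp [Equiv.subRight]
    have hScle : Sc ≤ (Cn ^ p * M (latt2 γ') ^ p) * S := by
      calc Sc ≤ ∑' α, (Cn ^ p * M (latt2 γ') ^ p) * G (α - γ') :=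
            Summable.tsum_le_tsum hble hSb hbnd
        _ = (Cn ^ p * M (latt2 γ') ^ p) * ∑' α, G (α - γ') := tsum_mul_left
        _ = (Cn ^ p * M (latt2 γ') ^ p) * S := by rw [htsum_shift]
    have hPar : ‖T (f γ')‖ ^ 2 = ∑' α, b α ^ 2 := hParseval (T (f γ'))
    rcases eq_or_lt_of_le hSc0 with hSc | hScpos
    · -- Sc = 0
      have hb0' : ∀ α, b α = 0 := by
        intro α
        have h1 : b α ^ p ≤ 0 :=
          hSc ▸ Summable.le_tsum hSb α (fun β _ => Real.rpow_nonneg (hb0 β) p)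
        by_contra hne
        have hpos : 0 < b α := lt_of_le_of_ne (hb0 α) (Ne.symm hne)
        exact absurd (le_antisymm h1 (Real.rpow_nonneg (hb0 α) p))
          (ne_of_gt (Real.rpow_pos_of_pos hpos p))
      have hT0 : ‖T (f γ')‖ = 0 := by
        have h2 : ∑' α, b α ^ 2 = (0:ℝ) := by
          have : (fun α => b α ^ 2) = fun _ => (0:ℝ) := funext fun α => by
            rw [hb0' α]; norm_num
          rw [this, tsum_zero]
        have h3 : ‖T (f γ')‖ ^ 2 = 0 := by rw [hPar, h2]
        exact pow_eq_zero_iff (by norm_num) |>.mp h3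
      rw [hT0, Real.zero_rpow hp0.ne']
      positivity
    · -- 0 < Sc
      have hb_le_Sc : ∀ α, b α ^ p ≤ Sc :=
        fun α => Summable.le_tsum hSb α (fun β _ => Real.rpow_nonneg (hb0 β) p)
      have hr : 0 ≤ 2 / p - 1 := by
        rw [sub_nonneg, le_div_iff₀ hp0]
        linarith
      have step : ∀ α, b α ^ 2 ≤ (b α ^ p) * Sc ^ (2 / p - 1) := by
        intro α
        rcases eq_or_lt_of_le (hb0 α) with hb | hb
        · rw [← hb]
          have : (0:ℝ) ^ 2 = 0 := by norm_num
          rw [this]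
          exact mul_nonneg (Real.rpow_nonneg le_rfl _) (Real.rpow_nonneg hSc0 _)
        · have e : b α ^ 2 = (b α ^ p) ^ (2 / p) := by
            rw [← Real.rpow_mul (hb0 α)]
            rw [show p * (2 / p) = 2 by field_simp]
            rw [show (2:ℝ) = ((2:ℕ):ℝ) by norm_num, Real.rpow_natCast]
          rw [e]
          have hbp : 0 < b α ^ p := Real.rpow_pos_of_pos hb p
          have h12 : 1 + (2 / p - 1) = 2 / p := by ring
          have e2 : (b α ^ p) ^ (2 / p) = (b α ^ p) * (b α ^ p) ^ (2 / p - 1) := by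
            have := Real.rpow_add hbp 1 (2 / p - 1)
            rw [h12, Real.rpow_one] at this
            exact this
          rw [e2]
          exact mul_le_mul_of_nonneg_left
            (Real.rpow_le_rpow hbp.le (hb_le_Sc α) hr) hbp.le
      have hsum2 : ‖T (f γ')‖ ^ 2 ≤ Sc ^ (2 / p) := by
        have hScr : Sc * Sc ^ (2 / p - 1) = Sc ^ (2 / p) := by
          have h12 : 1 + (2 / p - 1) = 2 / p := by ring
          have := Real.rpow_add hScpos 1 (2 / p - 1)
          rw [h12, Real.rpow_one] at this
          exact this.symm
        rw [hPar, ← hScr]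
        by_cases hs2 : Summable (fun α => b α ^ 2)
        · calc ∑' α, b α ^ 2 ≤ ∑' α, (b α ^ p) * Sc ^ (2 / p - 1) :=
                Summable.tsum_le_tsum step hs2 (hSb.mul_right _)
            _ = Sc * Sc ^ (2 / p - 1) := by rw [tsum_mul_right]
        · rw [tsum_eq_zero_of_not_summable hs2]
          exact mul_nonneg hSc0 (Real.rpow_nonneg hSc0 _)
      have hnorm_le : ‖T (f γ')‖ ≤ Sc ^ (1 / p) := by
        have h1 : ‖T (f γ')‖ = Real.sqrt (‖T (f γ')‖ ^ 2) :=
          (Real.sqrt_sq (norm_nonneg _)).symm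
        rw [h1]
        refine (Real.sqrt_le_sqrt hsum2).trans_eq ?_
        rw [Real.sqrt_eq_rpow, ← Real.rpow_mul hScpos.le]
        congr 1
        ring
      calc ‖T (f γ')‖ ^ p ≤ (Sc ^ (1 / p)) ^ p :=
            Real.rpow_le_rpow (norm_nonneg _) hnorm_le hp0.le
        _ = Sc := by
            rw [← Real.rpow_mul hSc0, one_div, inv_mul_cancel₀ hp0.ne', Real.rpow_one]
        _ ≤ (Cn ^ p * M (latt2 γ') ^ p) * S := hScle
        _ = (Cn ^ p * S) * M (latt2 γ') ^ p := by ring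
  exact Summable.of_nonneg_of_le (fun γ' => Real.rpow_nonneg (norm_nonneg _) p) key
    (hMsum.mul_left _)
end
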